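/- Let ν be a finite Borel measure on ℝ with finite moments, let B be positive real, and suppose μ is a finite Borel measure on ℝ whose Hankel moment matrices satisfy M_d(μ) ⪯ M_d(ν) for all d. If the moment sequences of μ and ν are determinate and moments of ν are finite, then μ(A) ≤ ν(A) for every Borel set A ⊆ ℝ with both measures compactly supported. -/

import Mathlib

open MeasureTheory Polynomial Matrix

/-- Hankel moment matrix of a measure on ℝ. -/
noncomputable def momentMatrix (μ : Measure ℝ) (d : ℕ) :
    Matrix (Fin (d + 1)) (Fin (d + 1)) ℝ :=
  fun k l => ∫ x, x ^ ((k : ℕ) + (l : ℕ)) ∂μ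


lemma integrable_eval_sq (μ : Measure ℝ) (hmom : ∀ j : ℕ, Integrable (fun x : ℝ => x ^ j) μ)
    (p : ℝ[X]) : Integrable (fun x => (p.eval x) ^ 2) μ := by
  have : (fun x : ℝ => (p.eval x) ^ 2) = fun x => (p * p).eval x := by
    funext x; simp [sq]
  rw [this]
  set q := p * p
  have : (fun x : ℝ => q.eval x) =
      fun x => ∑ i ∈ Finset.range (q.natDegree + 1), q.coeff i * x ^ i := by
    funext x; exact q.eval_eq_sum_range x
  rw [this]
  exact integrable_finset_sum _ (fun i _ => (hmom i).const_mul _)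

lemma integral_eval_sq (μ : Measure ℝ) (hmom : ∀ j : ℕ, Integrable (fun x : ℝ => x ^ j) μ)
    (p : ℝ[X]) (n : ℕ) (hn : p.natDegree < n) :
    ∫ x, (p.eval x) ^ 2 ∂μ =
      ∑ k ∈ Finset.range n, ∑ l ∈ Finset.range n,
        p.coeff k * p.coeff l * ∫ x, x ^ (k + l) ∂μ := by
  have hpt : ∀ x : ℝ, (p.eval x) ^ 2 =
      ∑ k ∈ Finset.range n, ∑ l ∈ Finset.range n, p.coeff k * p.coeff l * x ^ (k + l) := by
    intro x
    rw [sq, p.eval_eq_sum_range' hn, Finset.sum_mul_sum]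
    refine Finset.sum_congr rfl fun k _ => Finset.sum_congr rfl fun l _ => ?_
    rw [pow_add]; ring
  simp_rw [hpt]
  rw [integral_finset_sum _ (fun k _ => integrable_finset_sum _
    (fun l _ => ((hmom (k + l)).const_mul _)))]
  refine Finset.sum_congr rfl fun k _ => ?_
  rw [integral_finset_sum _ (fun l _ => ((hmom (k + l)).const_mul _))]
  exact Finset.sum_congr rfl fun l _ => integral_const_mul _ _

lemma integral_sq_le (μ ν : Measure ℝ)
    (hμmom : ∀ j : ℕ, Integrable (fun x : ℝ => x ^ j) μ)
    (hνmom : ∀ j : ℕ, Integrable (fun x : ℝ => x ^ j) ν)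
    (hloewner : ∀ d : ℕ, (momentMatrix ν d - momentMatrix μ d).PosSemidef)
    (p : ℝ[X]) : ∫ x, (p.eval x) ^ 2 ∂μ ≤ ∫ x, (p.eval x) ^ 2 ∂ν := by
  set d := p.natDegree
  set c : Fin (d + 1) → ℝ := fun k => p.coeff k with hc
  have h := (hloewner d).dotProduct_mulVec_nonneg c
  have expand : star c ⬝ᵥ ((momentMatrix ν d - momentMatrix μ d) *ᵥ c)
      = (∑ k : Fin (d + 1), ∑ l : Fin (d + 1),
          c k * c l * ∫ x, x ^ ((k : ℕ) + (l : ℕ)) ∂ν)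
      - (∑ k : Fin (d + 1), ∑ l : Fin (d + 1),
          c k * c l * ∫ x, x ^ ((k : ℕ) + (l : ℕ)) ∂μ) := by
    simp only [dotProduct, Matrix.mulVec, Matrix.sub_apply, Pi.star_apply, star_trivial,
      momentMatrix]
    rw [← Finset.sum_sub_distrib]
    refine Finset.sum_congr rfl fun k _ => ?_
    rw [Finset.mul_sum, ← Finset.sum_sub_distrib]
    refine Finset.sum_congr rfl fun l _ => ?_
    ring
  rw [expand] at h
  have hμ := integral_eval_sq μ hμmom p (d + 1) (Nat.lt_succ_self _)
  have hν := integral_eval_sq ν hνmom p (d + 1) (Nat.lt_succ_self _)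
  simp only [← Fin.sum_univ_eq_sum_range] at hμ hν
  rw [hμ, hν]
  linarith [h]

lemma integral_bc_le (μ ν : Measure ℝ) [IsFiniteMeasure μ] [IsFiniteMeasure ν]
    (hμmom : ∀ j : ℕ, Integrable (fun x : ℝ => x ^ j) μ)
    (hνmom : ∀ j : ℕ, Integrable (fun x : ℝ => x ^ j) ν)
    (hμsupp : ∃ R : ℝ, μ (Set.Icc (-R) R)ᶜ = 0)
    (hνsupp : ∃ R : ℝ, ν (Set.Icc (-R) R)ᶜ = 0)
    (key : ∀ p : ℝ[X], ∫ x, (p.eval x) ^ 2 ∂μ ≤ ∫ x, (p.eval x) ^ 2 ∂ν)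
    (f : ℝ → ℝ) (hf : Continuous f) (hf0 : ∀ x, 0 ≤ f x) (C : ℝ) (hfC : ∀ x, f x ≤ C) :
    ∫ x, f x ∂μ ≤ ∫ x, f x ∂ν := by
  obtain ⟨R₁, hR₁⟩ := hμsupp
  obtain ⟨R₂, hR₂⟩ := hνsupp
  set R : ℝ := max R₁ R₂ with hR
  set s : Set ℝ := Set.Icc (-R) R with hs
  have hsub₁ : Set.Icc (-R₁) R₁ ⊆ s :=
    Set.Icc_subset_Icc (neg_le_neg (le_max_left _ _)) (le_max_left _ _)
  have hsub₂ : Set.Icc (-R₂) R₂ ⊆ s :=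
    Set.Icc_subset_Icc (neg_le_neg (le_max_right _ _)) (le_max_right _ _)
  have hμs : μ sᶜ = 0 := measure_mono_null (Set.compl_subset_compl.2 hsub₁) hR₁
  have hνs : ν sᶜ = 0 := measure_mono_null (Set.compl_subset_compl.2 hsub₂) hR₂
  have haeμ : ∀ᵐ x ∂μ, x ∈ s := by
    rw [ae_iff]; simpa [Set.compl_def] using hμs
  have haeν : ∀ᵐ x ∂ν, x ∈ s := by
    rw [ae_iff]; simpa [Set.compl_def] using hνs
  have hC0 : 0 ≤ C := le_trans (hf0 0) (hfC 0)
  have hintfμ : Integrable f μ := by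
    refine (integrable_const C).mono' hf.aestronglyMeasurable (ae_of_all _ fun x => ?_)
    rw [Real.norm_eq_abs, abs_of_nonneg (hf0 x)]; exact hfC x
  have hintfν : Integrable f ν := by
    refine (integrable_const C).mono' hf.aestronglyMeasurable (ae_of_all _ fun x => ?_)
    rw [Real.norm_eq_abs, abs_of_nonneg (hf0 x)]; exact hfC x
  set μu : ℝ := (μ Set.univ).toReal with hμu
  set νu : ℝ := (ν Set.univ).toReal with hνu
  have hμu0 : 0 ≤ μu := ENNReal.toReal_nonneg
  have hνu0 : 0 ≤ νu := ENNReal.toReal_nonneg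
  refine le_of_forall_pos_le_add fun η hη => ?_
  set K : ℝ := μu + 2 * νu + 1 with hK
  have hK0 : 0 < K := by positivity
  set ε : ℝ := η / K with hε
  have hε0 : 0 < ε := div_pos hη hK0
  set M : ℝ := Real.sqrt (C + ε) with hM
  have hM0 : 0 ≤ M := Real.sqrt_nonneg _
  set ε' : ℝ := min 1 (ε / (2 * M + 2)) with hε'
  have hε'0 : 0 < ε' := lt_min one_pos (div_pos hε0 (by linarith))
  have hε'1 : ε' ≤ 1 := min_le_left _ _
  have hε'2 : ε' ≤ ε / (2 * M + 2) := min_le_right _ _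
  set δ : ℝ := ε' * (2 * M + ε') with hδ
  have hδ0 : 0 ≤ δ := le_of_lt (by positivity)
  have hδε : δ ≤ ε := by
    have h1 : δ ≤ ε' * (2 * M + 2) := by nlinarith
    have h2 : ε' * (2 * M + 2) ≤ (ε / (2 * M + 2)) * (2 * M + 2) := by nlinarith
    have h3 : (ε / (2 * M + 2)) * (2 * M + 2) = ε := by field_simp
    linarith
  set g : ℝ → ℝ := fun x => Real.sqrt (f x + ε) with hg
  have hgc : Continuous g := (hf.add continuous_const).sqrt
  obtain ⟨p, hp⟩ := exists_polynomial_near_of_continuousOn (-R) R g hgc.continuousOn ε' hε'0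
  -- pointwise bounds on s
  have hbound : ∀ x ∈ s, f x + ε ≤ (p.eval x) ^ 2 + δ ∧ (p.eval x) ^ 2 ≤ f x + ε + δ := by
    intro x hx
    have hgx0 : 0 ≤ g x := Real.sqrt_nonneg _
    have hgxM : g x ≤ M := Real.sqrt_le_sqrt (by linarith [hfC x])
    have hgsq : g x ^ 2 = f x + ε := Real.sq_sqrt (by linarith [hf0 x])
    have habs := le_of_lt (hp x hx)
    rw [abs_le] at habs
    obtain ⟨ha1, ha2⟩ := habs
    constructor
    · nlinarith [sq_nonneg (p.eval x - g x)]
    · nlinarith [sq_nonneg (p.eval x - g x)]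
  have hintp2μ : Integrable (fun x => (p.eval x) ^ 2) μ := integrable_eval_sq μ hμmom p
  have hintp2ν : Integrable (fun x => (p.eval x) ^ 2) ν := integrable_eval_sq ν hνmom p
  have h1 : ∫ x, (f x + ε) ∂μ ≤ ∫ x, ((p.eval x) ^ 2 + δ) ∂μ := by
    refine integral_mono_ae (hintfμ.add (integrable_const _))
      (hintp2μ.add (integrable_const _)) ?_
    exact haeμ.mono fun x hx => (hbound x hx).1
  have h2 := key p
  have h3 : ∫ x, (p.eval x) ^ 2 ∂ν ≤ ∫ x, (f x + (ε + δ)) ∂ν := by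
    refine integral_mono_ae hintp2ν (hintfν.add (integrable_const _)) ?_
    exact haeν.mono fun x hx => by dsimp only; linarith [(hbound x hx).2]
  rw [integral_add hintfμ (integrable_const _), integral_const, smul_eq_mul] at h1
  rw [integral_add hintp2μ (integrable_const _), integral_const, smul_eq_mul] at h1
  rw [integral_add hintfν (integrable_const _), integral_const, smul_eq_mul] at h3
  have hεK : ε * K = η := div_mul_cancel₀ η (ne_of_gt hK0)
  have e1 : μ.real Set.univ = μu := rfl
  have e2 : ν.real Set.univ = νu := rfl
  rw [e1] at h1
  rw [e2] at h3
  nlinarith [h1, h2, h3]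

theorem setwise_le_of_hankel_loewner
    (μ ν : Measure ℝ) [IsFiniteMeasure μ] [IsFiniteMeasure ν]
    (hμmom : ∀ j : ℕ, Integrable (fun x : ℝ => x ^ j) μ)
    (hνmom : ∀ j : ℕ, Integrable (fun x : ℝ => x ^ j) ν)
    (hμsupp : ∃ R : ℝ, μ (Set.Icc (-R) R)ᶜ = 0)
    (hνsupp : ∃ R : ℝ, ν (Set.Icc (-R) R)ᶜ = 0)
    (hdetμ : ∀ ρ : Measure ℝ, IsFiniteMeasure ρ →
      (∀ j : ℕ, ∫ x, x ^ j ∂ρ = ∫ x, x ^ j ∂μ) → ρ = μ)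
    (hdetν : ∀ ρ : Measure ℝ, IsFiniteMeasure ρ →
      (∀ j : ℕ, ∫ x, x ^ j ∂ρ = ∫ x, x ^ j ∂ν) → ρ = ν)
    (hloewner : ∀ d : ℕ, (momentMatrix ν d - momentMatrix μ d).PosSemidef) :
    ∀ A : Set ℝ, MeasurableSet A → μ A ≤ ν A := by
  intro A hA
  have key := integral_sq_le μ ν hμmom hνmom hloewner
  have hbc : ∀ f : BoundedContinuousFunction ℝ NNReal, ∫⁻ x, f x ∂μ ≤ ∫⁻ x, f x ∂ν := by
    intro f
    have hcont : Continuous fun x => (f x : ℝ) := NNReal.continuous_coe.comp f.continuous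
    obtain ⟨Cf, hCf⟩ := f.map_bounded'
    set B : ℝ := (f 0 : ℝ) + Cf with hB
    have hbnd : ∀ x, (f x : ℝ) ≤ B := by
      intro x
      have h : |(f x : ℝ) - (f 0 : ℝ)| ≤ Cf := by
        rw [← NNReal.dist_eq]; exact hCf x 0
      rw [hB]; linarith [(abs_le.mp h).2]
    have hintμ : Integrable (fun x => (f x : ℝ)) μ := by
      refine (integrable_const B).mono' hcont.aestronglyMeasurable (ae_of_all _ fun x => ?_)
      rw [Real.norm_eq_abs, abs_of_nonneg ((f x).coe_nonneg)]; exact hbnd x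
    have hintν : Integrable (fun x => (f x : ℝ)) ν := by
      refine (integrable_const B).mono' hcont.aestronglyMeasurable (ae_of_all _ fun x => ?_)
      rw [Real.norm_eq_abs, abs_of_nonneg ((f x).coe_nonneg)]; exact hbnd x
    have hle : ∫ x, (f x : ℝ) ∂μ ≤ ∫ x, (f x : ℝ) ∂ν :=
      integral_bc_le μ ν hμmom hνmom hμsupp hνsupp key _ hcont (fun x => (f x).2) B hbnd
    rw [lintegral_coe_eq_integral (fun x => f x) hintμ,
      lintegral_coe_eq_integral (fun x => f x) hintν]
    exact ENNReal.ofReal_le_ofReal hle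
  have hclosed : ∀ F : Set ℝ, IsClosed F → μ F ≤ ν F := by
    intro F hF
    have o1 := HasOuterApproxClosed.tendsto_lintegral_apprSeq hF μ
    have o2 := HasOuterApproxClosed.tendsto_lintegral_apprSeq hF ν
    exact le_of_tendsto_of_tendsto' o1 o2 fun n => hbc (hF.apprSeq n)
  rw [hA.measure_eq_iSup_isCompact]
  exact iSup_le fun K => iSup_le fun hKA => iSup_le fun hK =>
    le_trans (hclosed K hK.isClosed) (measure_mono hKA)
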